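/- arXiv:2209.07433 — 4 statements merged into one kernel-verified Lean document; each statement's English description precedes it below -/
import Mathlib

section
/- The operator M = A(x)T⁺ + B(x)T⁻ + C(x)I, where A(x) = (N-x)(x-β+1), B(x) = x(α+β+N+1-x), C(x) = -(A(x)+B(x)), acts on the basis φ_n(x) = (-x)_n as M φ_n(x) = -n(n+α+1) φ_n(x) + n(n-β)(n-N-1) φ_{n-1}(x), for 0 ≤ n ≤ N, with φ_{-1} = 0. -/
noncomputable def poch (a : ℝ) (n : ℕ) : ℝ := ∏ i ∈ Finset.range n, (a + i)

/-- The Pochhammer basis φ_n(x) = (-x)_n. -/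
noncomputable def phi (n : ℕ) (x : ℝ) : ℝ := poch (-x) n

lemma poch_succ (a : ℝ) (n : ℕ) : poch a (n + 1) = poch a n * (a + n) := by
  simp [poch, Finset.prod_range_succ]

lemma poch_succ' (a : ℝ) (n : ℕ) : poch a (n + 1) = a * poch (a + 1) n := by
  induction n with
  | zero => simp [poch]
  | succ m ih =>
    rw [poch_succ, ih, poch_succ]
    push_cast
    ring

lemma poch_sub_one (a : ℝ) (m : ℕ) :
    poch (a - 1) (m + 1) = poch a (m + 1) - (m + 1) * poch a m := by
  induction m with
  | zero => simp [poch]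
  | succ k ih =>
    rw [poch_succ (a-1) (k+1), ih]
    simp only [poch_succ]
    push_cast
    ring

theorem stmt5 (N : ℕ) (α β : ℝ) (n : ℕ) (hn : n ≤ N) (x : ℝ) :
    ((N : ℝ) - x) * (x - β + 1) * phi n (x + 1)
      + x * (α + β + N + 1 - x) * phi n (x - 1)
      + (-(((N : ℝ) - x) * (x - β + 1) + x * (α + β + N + 1 - x))) * phi n x
      = -(n : ℝ) * ((n : ℝ) + α + 1) * phi n x
        + (n : ℝ) * ((n : ℝ) - β) * ((n : ℝ) - N - 1) * phi (n - 1) x := by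
  cases n with
  | zero => simp [phi, poch]
  | succ m =>
    have h1 : phi (m + 1) (x + 1) = phi (m + 1) x - (m + 1) * phi m x := by
      have := poch_sub_one (-x) m
      simpa [phi, show -(x+1) = -x - 1 by ring] using this
    have h2 : x * phi (m + 1) (x - 1) = -(phi (m + 1) x * ((m : ℝ) + 1 - x)) := by
      have e1 : phi (m + 2) x = -x * phi (m + 1) (x - 1) := by
        have := poch_succ' (-x) (m + 1)
        simpa [phi, show -x + 1 = -(x-1) by ring] using this
      have e2 : phi (m + 2) x = phi (m + 1) x * (-x + ((m:ℕ) + 1 : ℕ)) := poch_succ (-x) (m + 1)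
      have h := e1.symm.trans e2
      push_cast at h
      linarith [h]
    have h3 : phi (m + 1) x = phi m x * (-x + m) := poch_succ (-x) m
    have h4 : phi (m + 1 - 1) x = phi m x := by norm_num
    rw [h4, h1, h3]
    have h2' : x * (α + β + N + 1 - x) * phi (m + 1) (x - 1)
        = (α + β + N + 1 - x) * -(phi (m+1) x * ((m : ℝ) + 1 - x)) := by
      rw [← h2]; ring
    rw [h2', h3]
    push_cast
    ring
end

section
/- The operator Y = x(N-x)T⁺ + x(x-N-α-1)I acts on the basis φ_n(x) = (-x)_n as Y φ_n(x) = (n+α+1) φ_{n+1}(x) - n(2n+α-N) φ_n(x) + n(n-1)(n-N-1) φ_{n-1}(x), for 0 ≤ n ≤ N, with φ_{-1} = 0. -/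
lemma phi_succ (n : ℕ) (x : ℝ) : phi (n + 1) x = phi n x * ((n : ℝ) - x) := by
  rw [phi, phi, poch, poch, Finset.prod_range_succ]; ring

lemma phi_shift (n : ℕ) (x : ℝ) : phi (n + 1) (x + 1) = (-x - 1) * phi n x := by
  simp only [phi, poch, Finset.prod_range_succ']
  rw [mul_comm]
  congr 1
  · push_cast; ring
  · apply Finset.prod_congr rfl; intro i _; push_cast; ring

theorem stmt6 (N : ℕ) (α : ℝ) (n : ℕ) (hn : n ≤ N) (x : ℝ) :
    x * ((N : ℝ) - x) * phi n (x + 1) + x * (x - N - α - 1) * phi n x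
      = ((n : ℝ) + α + 1) * phi (n + 1) x
        - (n : ℝ) * (2 * n + α - N) * phi n x
        + (n : ℝ) * ((n : ℝ) - 1) * ((n : ℝ) - N - 1) * phi (n - 1) x := by
  cases n with
  | zero => simp [phi_succ, phi, poch]; ring
  | succ m =>
    have h1 := phi_succ m x
    have h2 := phi_succ (m + 1) x
    have h3 := phi_shift m x
    simp only [Nat.add_sub_cancel, h1, h2, h3]
    push_cast
    ring
end

section
/- Define P_n(x) = ∑_{k=0}^{n} [(-n)_k (α+1)_k / (k! (-N)_k (1-β-n)_k)] (-x)_k. Then P_n solves the generalized eigenvalue problem M P_n(x) = n L P_n(x), where L = (N-x)T⁺ + (x-N-α-1)I and M = A(x)T⁺ + B(x)T⁻ + C(x)I with A(x) = (N-x)(x-β+1), B(x) = x(α+β+N+1-x), C(x) = -(A(x)+B(x)). -/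
/-- The R_I polynomial of Hahn type P_n(x; α, β, N). -/
noncomputable def P (α β : ℝ) (N n : ℕ) (x : ℝ) : ℝ :=
  ∑ k ∈ Finset.range (n + 1),
    poch (-(n : ℝ)) k * poch (α + 1) k /
      ((Nat.factorial k : ℝ) * poch (-(N : ℝ)) k * poch (1 - β - n) k) * poch (-x) k

namespace S7
lemma poch_zero (a : ℝ) : poch a 0 = 1 := by simp [poch]
lemma poch_succ (a : ℝ) (k : ℕ) : poch a (k+1) = poch a k * (a + k) :=
  Finset.prod_range_succ _ _
lemma poch_succ' (a : ℝ) (k : ℕ) : poch a (k+1) = a * poch (a+1) k := by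
  unfold poch
  rw [Finset.prod_range_succ']
  simp only [Nat.cast_zero, add_zero]
  rw [mul_comm]
  congr 1
  exact Finset.prod_congr rfl fun i _ => by push_cast; ring
lemma poch_nat_zero (n k : ℕ) (h : n < k) : poch (-(n:ℝ)) k = 0 :=
  Finset.prod_eq_zero (Finset.mem_range.2 h) (by simp)
lemma q_shift_up (x : ℝ) (k : ℕ) :
    poch (-(x+1)) k = poch (-x) k - k * poch (-x) (k-1) := by
  cases k with
  | zero => simp [poch_zero]
  | succ m =>
    have h1 : poch (-(x+1)) (m+1) = (-(x+1)) * poch (-(x+1)+1) m := poch_succ' _ _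
    have e : (-(x+1)+1 : ℝ) = -x := by ring
    rw [e] at h1
    rw [h1, poch_succ (-x) m]
    simp only [Nat.add_sub_cancel]
    push_cast
    ring
lemma q_shift_down (x : ℝ) (k : ℕ) :
    x * poch (-(x-1)) k = (x - k) * poch (-x) k := by
  have h1 := poch_succ (-x) k
  have h2 := poch_succ' (-x) k
  have e : (-x + 1 : ℝ) = -(x-1) := by ring
  rw [e] at h2
  linear_combination h2 - h1
lemma q_mul (x : ℝ) (k : ℕ) :
    x * poch (-x) k = k * poch (-x) k - poch (-x) (k+1) := by
  have := poch_succ (-x) k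
  linear_combination this
noncomputable def cc (α β : ℝ) (N n : ℕ) (k : ℕ) : ℝ :=
  poch (-(n : ℝ)) k * poch (α + 1) k /
      ((Nat.factorial k : ℝ) * poch (-(N : ℝ)) k * poch (1 - β - n) k)
lemma cc_zero (α β : ℝ) (N n k : ℕ) (h : n < k) : cc α β N n k = 0 := by
  simp [cc, poch_nat_zero n k h]
lemma crec (α β : ℝ) (N n : ℕ)
    (hβ : ∀ k ≤ n, poch (1 - β - n) k ≠ 0)
    (hN : ∀ k ≤ n, poch (-(N : ℝ)) k ≠ 0) (k : ℕ) :
    ((n:ℝ) - k) * ((k:ℝ) + α + 1) * cc α β N n k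
      = ((k:ℝ) + 1) * ((N:ℝ) - k) * ((k:ℝ) + 1 - β - n) * cc α β N n (k+1) := by
  rcases lt_trichotomy k n with h | h | h
  · have f1 := hN k h.le
    have f2 := hN (k+1) h
    have f3 := hβ k h.le
    have f4 := hβ (k+1) h
    rw [poch_succ] at f2 f4
    have g2 : (-(N:ℝ) + k) ≠ 0 := (mul_ne_zero_iff.mp f2).2
    have g4 : (1 - β - (n:ℝ) + k) ≠ 0 := (mul_ne_zero_iff.mp f4).2
    have f5 : (Nat.factorial k : ℝ) ≠ 0 := Nat.cast_ne_zero.2 k.factorial_ne_zero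
    have f6 : ((k:ℝ) + 1) ≠ 0 := by positivity
    unfold cc
    rw [poch_succ (-(n:ℝ)) k, poch_succ (α+1) k, poch_succ (-(N:ℝ)) k,
      poch_succ (1 - β - (n:ℝ)) k, Nat.factorial_succ]
    push_cast
    field_simp
    ring
  · subst h
    rw [cc_zero α β N k (k+1) (by omega)]
    simp
  · rw [cc_zero α β N n k h, cc_zero α β N n (k+1) (by omega)]
    ring
lemma Pext (α β : ℝ) (N n : ℕ) (y : ℝ) :
    P α β N n y = ∑ k ∈ Finset.range (n + 3), cc α β N n k * poch (-y) k := by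
  rw [show n + 3 = (n+1) + 1 + 1 by omega, Finset.sum_range_succ, Finset.sum_range_succ,
    cc_zero α β N n (n+1+1) (by omega), cc_zero α β N n (n+1) (by omega)]
  simp [P, cc]
lemma sum_shift_down (m : ℕ) (f : ℕ → ℝ) (h0 : f 0 = 0) (hm : f (m+1) = 0) :
    ∑ k ∈ Finset.range (m+1), f k = ∑ k ∈ Finset.range (m+1), f (k+1) := by
  rw [Finset.sum_range_succ', Finset.sum_range_succ, h0, hm, add_zero]
lemma sum_shift_up (m : ℕ) (f q : ℕ → ℝ) (hm : f m = 0) :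
    ∑ k ∈ Finset.range (m+1), f k * q (k+1)
      = ∑ k ∈ Finset.range (m+1), (if k = 0 then 0 else f (k-1)) * q k := by
  rw [Finset.sum_range_succ (fun k => f k * q (k+1)), hm, zero_mul, add_zero,
    Finset.sum_range_succ' (fun k => (if k = 0 then 0 else f (k-1)) * q k)]
  simp
lemma sum_shift_up2 (m : ℕ) (f q : ℕ → ℝ) (hm : f (m+1) = 0) (hm' : f m = 0) :
    ∑ k ∈ Finset.range (m+2), f k * q (k+2)
      = ∑ k ∈ Finset.range (m+2), (if k ≤ 1 then 0 else f (k-2)) * q k := by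
  rw [show m + 2 = (m+1) + 1 by omega]
  rw [Finset.sum_range_succ (fun k => f k * q (k+2)), hm, zero_mul, add_zero,
    Finset.sum_range_succ (fun k => f k * q (k+2)), hm', zero_mul, add_zero,
    Finset.sum_range_succ' (fun k => (if k ≤ 1 then 0 else f (k-2)) * q k),
    Finset.sum_range_succ' (fun k => (if k + 1 ≤ 1 then 0 else f (k+1-2)) * q (k+1))]
  simp
lemma main_sum (α β : ℝ) (N n : ℕ)
    (hβ : ∀ k ≤ n, poch (1 - β - n) k ≠ 0)
    (hN : ∀ k ≤ n, poch (-(N : ℝ)) k ≠ 0) (x : ℝ) :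
    ∑ k ∈ Finset.range (n + 3),
      (cc α β N n k * (((N:ℝ)-x)*(x-β+1) * poch (-(x+1)) k
        + x*(α+β+(N:ℝ)+1-x) * poch (-(x-1)) k
        + (-(((N:ℝ)-x)*(x-β+1) + x*(α+β+(N:ℝ)+1-x))) * poch (-x) k
        - (n:ℝ) * (((N:ℝ)-x) * poch (-(x+1)) k + (x-(N:ℝ)-α-1) * poch (-x) k))) = 0 := by
  have step1 : ∑ k ∈ Finset.range (n + 3),
      (cc α β N n k * (((N:ℝ)-x)*(x-β+1) * poch (-(x+1)) k
        + x*(α+β+(N:ℝ)+1-x) * poch (-(x-1)) k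
        + (-(((N:ℝ)-x)*(x-β+1) + x*(α+β+(N:ℝ)+1-x))) * poch (-x) k
        - (n:ℝ) * (((N:ℝ)-x) * poch (-(x+1)) k + (x-(N:ℝ)-α-1) * poch (-x) k)))
      = ∑ k ∈ Finset.range (n + 3),
        (cc α β N n k * ((k:ℝ)^2 - (k:ℝ)*(α+β+(N:ℝ)+1) + (n:ℝ)*(α+1)) * poch (-x) k
          - cc α β N n k * (k:ℝ) * poch (-x) (k+1)
          - cc α β N n k * (k:ℝ) * (((N:ℝ)-x)*(x+1-β-(n:ℝ))) * poch (-x) (k-1)) := by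
    refine Finset.sum_congr rfl fun k _ => ?_
    rw [q_shift_up x k]
    linear_combination (cc α β N n k * (α+β+(N:ℝ)+1-x)) * q_shift_down x k
      + (cc α β N n k * (k:ℝ)) * q_mul x k
  rw [step1]
  rw [Finset.sum_sub_distrib, Finset.sum_sub_distrib]
  -- shift the second sum
  have h2 : ∑ k ∈ Finset.range (n + 3), cc α β N n k * (k:ℝ) * poch (-x) (k+1)
      = ∑ k ∈ Finset.range (n + 3),
          (if k = 0 then 0 else cc α β N n (k-1) * ((k-1 : ℕ):ℝ)) * poch (-x) k := by
    exact sum_shift_up (n+2) (fun k => cc α β N n k * (k:ℝ)) (fun j => poch (-x) j)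
      (by simp [cc_zero α β N n (n+2) (by omega)])
  rw [h2]
  -- third sum: shift down then expand
  have h3 : ∑ k ∈ Finset.range (n + 3),
        cc α β N n k * (k:ℝ) * (((N:ℝ)-x)*(x+1-β-(n:ℝ))) * poch (-x) (k-1)
      = ∑ k ∈ Finset.range (n + 3),
        cc α β N n (k+1) * ((k:ℝ)+1) * (((N:ℝ)-x)*(x+1-β-(n:ℝ))) * poch (-x) k := by
    have hs := sum_shift_down (n+2)
      (fun k => cc α β N n k * (k:ℝ) * (((N:ℝ)-x)*(x+1-β-(n:ℝ))) * poch (-x) (k-1))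
      (by simp) (by simp [cc_zero α β N n (n+3) (by omega)])
    rw [hs]
    exact Finset.sum_congr rfl fun k _ => by push_cast [Nat.add_sub_cancel]; ring
  rw [h3]
  -- expand U * q_k
  have h4 : ∑ k ∈ Finset.range (n + 3),
        cc α β N n (k+1) * ((k:ℝ)+1) * (((N:ℝ)-x)*(x+1-β-(n:ℝ))) * poch (-x) k
      = ∑ k ∈ Finset.range (n + 3),
        (cc α β N n (k+1) * ((k:ℝ)+1) * (((N:ℝ)-(k:ℝ))*((k:ℝ)+1-β-(n:ℝ))) * poch (-x) k
          + cc α β N n (k+1) * ((k:ℝ)+1) * (2*(k:ℝ)+2-β-(n:ℝ)-(N:ℝ)) * poch (-x) (k+1)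
          - cc α β N n (k+1) * ((k:ℝ)+1) * poch (-x) (k+2)) := by
    refine Finset.sum_congr rfl fun k _ => ?_
    have p2 : poch (-x) (k+2) = poch (-x) (k+1) * (-x + ((k:ℝ)+1)) := by
      have := poch_succ (-x) (k+1); push_cast at this; exact this
    have p1 := poch_succ (-x) k
    rw [p2, p1]
    ring
  rw [h4, Finset.sum_sub_distrib, Finset.sum_add_distrib]
  -- shift the two trailing sums
  have h5 : ∑ k ∈ Finset.range (n + 3),
        cc α β N n (k+1) * ((k:ℝ)+1) * (2*(k:ℝ)+2-β-(n:ℝ)-(N:ℝ)) * poch (-x) (k+1)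
      = ∑ k ∈ Finset.range (n + 3),
        (if k = 0 then 0 else
          cc α β N n ((k-1)+1) * (((k-1 : ℕ):ℝ)+1) * (2*((k-1 : ℕ):ℝ)+2-β-(n:ℝ)-(N:ℝ)))
          * poch (-x) k := by
    exact sum_shift_up (n+2)
      (fun k => cc α β N n (k+1) * ((k:ℝ)+1) * (2*(k:ℝ)+2-β-(n:ℝ)-(N:ℝ)))
      (fun j => poch (-x) j)
      (by simp [cc_zero α β N n (n+3) (by omega)])
  have h6 : ∑ k ∈ Finset.range (n + 3),
        cc α β N n (k+1) * ((k:ℝ)+1) * poch (-x) (k+2)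
      = ∑ k ∈ Finset.range (n + 3),
        (if k ≤ 1 then 0 else cc α β N n ((k-2)+1) * (((k-2 : ℕ):ℝ)+1)) * poch (-x) k := by
    exact sum_shift_up2 (n+1)
      (fun k => cc α β N n (k+1) * ((k:ℝ)+1))
      (fun j => poch (-x) j)
      (by simp [cc_zero α β N n (n+3) (by omega)])
      (by simp [cc_zero α β N n (n+2) (by omega)])
  rw [h5, h6]
  rw [← Finset.sum_add_distrib, ← Finset.sum_sub_distrib, ← Finset.sum_sub_distrib,
    ← Finset.sum_sub_distrib]
  refine Finset.sum_eq_zero fun k _ => ?_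
  rcases k with _ | (_ | j)
  · have h := crec α β N n hβ hN 0
    push_cast at h
    norm_num
    linear_combination poch (-x) 0 * h
  · have h := crec α β N n hβ hN 1
    push_cast at h
    norm_num
    linear_combination poch (-x) 1 * h
  · have h := crec α β N n hβ hN (j+1+1)
    push_cast at h
    simp only [show j+1+1-1 = j+1 from rfl, show j+1+1-2 = j from rfl,
      if_neg (by omega : ¬(j+1+1 = 0)), if_neg (by omega : ¬(j+1+1 ≤ 1))]
    push_cast
    linear_combination poch (-x) (j+1+1) * h

end S7
theorem stmt7 (N n : ℕ) (α β : ℝ) (hn : n ≤ N)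
    (hβ : ∀ k ≤ n, poch (1 - β - n) k ≠ 0)
    (hN : ∀ k ≤ n, poch (-(N : ℝ)) k ≠ 0) :
    ∀ x : ℝ,
      ((N : ℝ) - x) * (x - β + 1) * P α β N n (x + 1)
        + x * (α + β + N + 1 - x) * P α β N n (x - 1)
        + (-(((N : ℝ) - x) * (x - β + 1) + x * (α + β + N + 1 - x))) * P α β N n x
      = (n : ℝ) * (((N : ℝ) - x) * P α β N n (x + 1) + (x - N - α - 1) * P α β N n x) := by
  intro x
  rw [S7.Pext α β N n (x+1), S7.Pext α β N n (x-1), S7.Pext α β N n x, ← sub_eq_zero]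
  refine Eq.trans ?_ (S7.main_sum α β N n hβ hN x)
  simp only [Finset.mul_sum, mul_add, ← Finset.sum_add_distrib, ← Finset.sum_sub_distrib]
  exact Finset.sum_congr rfl fun k _ => by ring
end

section
/- The operator Z* acting on rational functions and defined by its bidiagonal action Z* ρ_n(x) = n ρ_n(x) - [n(1+N-n)/(1+α+N-n)] ρ_{n-1}(x) on the basis ρ_n(x) = (-x)_n/(1+β-x)_n satisfies M* = Z* L*, where L* ρ_n = (α+N-n) ρ_{n+1} - (1+α+N-n) ρ_n and M* ρ_n = (α+N-n)(1+n) ρ_{n+1} + [n(2n-α) - N(2n+1)] ρ_n + n(1+N-n) ρ_{n-1}. -/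
/-- The rational basis ρ_n(x) = (-x)_n / (1+β-x)_n. -/
noncomputable def rho (β : ℝ) (n : ℕ) (x : ℝ) : ℝ := poch (-x) n / poch (1 + β - x) n

/-- M* = Z* L*, verified on each basis element ρ_n: applying the bidiagonal
action of Z* to L* ρ_n = (α+N-n) ρ_{n+1} - (1+α+N-n) ρ_n reproduces M* ρ_n. -/
theorem stmt10 (N : ℕ) (α β : ℝ) (n : ℕ) (hn : n ≤ N)
    (h1 : (α + (N : ℝ) - n) ≠ 0) (h2 : (1 + α + (N : ℝ) - n) ≠ 0) :
    ∀ x : ℝ,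
      (α + (N : ℝ) - n) * (1 + n) * rho β (n + 1) x
        + ((n : ℝ) * (2 * n - α) - (N : ℝ) * (2 * n + 1)) * rho β n x
        + (n : ℝ) * (1 + (N : ℝ) - n) * rho β (n - 1) x
      = (α + (N : ℝ) - n) *
          (((n : ℝ) + 1) * rho β (n + 1) x
            - (((n : ℝ) + 1) * (1 + (N : ℝ) - ((n : ℝ) + 1)) / (1 + α + (N : ℝ) - ((n : ℝ) + 1)))
                * rho β n x)
        - (1 + α + (N : ℝ) - n) *
            ((n : ℝ) * rho β n x
              - ((n : ℝ) * (1 + (N : ℝ) - n) / (1 + α + (N : ℝ) - n)) * rho β (n - 1) x) := by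
  intro x
  have e : (1 + α + (N : ℝ) - ((n : ℝ) + 1)) = α + (N : ℝ) - n := by ring
  rw [e]
  field_simp
  ring
end
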